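/- For λ₀, λ₁ > 0, the Hellinger-type integral ∫₀^∞ (√(Y(x)) − 1)² ν₀(dx), where Y(x) = e^{-(λ₁−λ₀)x} is the density of ν₁ with respect to ν₀ for the gamma-process Lévy measures νᵢ(dx) = 1_{x>0} e^{-λᵢ x} dx/x, equals log((λ₀+λ₁)²/(4 λ₀ λ₁)). -/

import Mathlib

open Real Set MeasureTheory

lemma aux_exp_int (t : ℝ) (ht : 0 < t) : ∫ x in Ioi (0:ℝ), exp (-(t*x)) = 1/t := by
  have h := integral_exp_neg_mul_rpow one_pos ht
  simp only [rpow_one, neg_div, div_one] at h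
  rw [show (1:ℝ) + 1 = 2 by norm_num, Real.Gamma_two, mul_one, rpow_neg_one] at h
  rw [show (1:ℝ)/t = t⁻¹ by rw [one_div], ← h]
  congr 1 with x
  ring_nf

lemma inner_int (a b x : ℝ) (hx : 0 < x) :
    ∫ t in a..b, exp (-(t*x)) = (exp (-(a*x)) - exp (-(b*x)))/x := by
  have hc : (-x) ≠ 0 := neg_ne_zero.mpr hx.ne'
  have h : (∫ t in a..b, exp (t * (-x))) = (-x)⁻¹ • ∫ u in a*(-x)..b*(-x), exp u :=
    intervalIntegral.integral_comp_mul_right exp hc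
  rw [integral_exp] at h
  simp only [mul_neg, ← neg_mul, smul_eq_mul] at h
  simp only [neg_mul] at h
  rw [h]
  field_simp
  ring

lemma frullani_le (a b : ℝ) (ha : 0 < a) (hab : a ≤ b) :
    IntegrableOn (fun x => (exp (-(a*x)) - exp (-(b*x)))/x) (Ioi 0) ∧
    ∫ x in Ioi (0:ℝ), (exp (-(a*x)) - exp (-(b*x)))/x = log b - log a := by
  set μ := volume.restrict (Ioi (0:ℝ)) with hμ
  set ν := volume.restrict (Icc a b) with hν
  have hcont : Continuous (fun p : ℝ × ℝ => exp (-(p.2 * p.1))) := by continuity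
  have hmeas : AEStronglyMeasurable (fun p : ℝ × ℝ => exp (-(p.2 * p.1))) (μ.prod ν) :=
    hcont.aestronglyMeasurable
  have hgint : IntegrableOn (fun x : ℝ => exp (-(a*x)) * (b - a)) (Ioi 0) := by
    have := (exp_neg_integrableOn_Ioi 0 ha).mul_const (b - a)
    simpa [neg_mul, IntegrableOn] using this
  have hf : Integrable (fun p : ℝ × ℝ => exp (-(p.2 * p.1))) (μ.prod ν) := by
    rw [integrable_prod_iff hmeas]
    constructor
    · filter_upwards with x
      exact (Continuous.integrableOn_Icc (by continuity))
    · apply Integrable.mono hgint (hmeas.norm.integral_prod_right')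
      rw [ae_restrict_iff' measurableSet_Ioi]
      filter_upwards with x hx
      have hnn : 0 ≤ ∫ t, ‖exp (-(t*x))‖ ∂ν := integral_nonneg fun t => norm_nonneg _
      rw [Real.norm_of_nonneg hnn, Real.norm_of_nonneg (by have h := sub_nonneg.mpr hab; positivity)]
      have hbound : ∀ t ∈ Icc a b, ‖‖exp (-(t*x))‖‖ ≤ exp (-(a*x)) := by
        intro t ht
        rw [norm_norm, Real.norm_of_nonneg (exp_pos _).le]
        exact exp_le_exp.mpr (by nlinarith [ht.1, hx.out])
      have := norm_setIntegral_le_of_norm_le_const (C := exp (-(a*x)))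
        (by rw [Real.volume_Icc]; exact ENNReal.ofReal_lt_top) hbound
        (f := fun t => ‖exp (-(t*x))‖)
      rw [Real.norm_of_nonneg hnn] at this
      calc (∫ t, ‖exp (-(t*x))‖ ∂ν) ≤ exp (-(a*x)) * (volume (Icc a b)).toReal := this
        _ = exp (-(a*x)) * (b - a) := by rw [Real.volume_Icc, ENNReal.toReal_ofReal (by linarith)]
  have hf' : Integrable (Function.uncurry (fun x t : ℝ => exp (-(t*x)))) (μ.prod ν) := hf
  have hswap := integral_integral_swap hf'
  have hFcong : ∀ᵐ x ∂μ, (∫ t, exp (-(t*x)) ∂ν) = (exp (-(a*x)) - exp (-(b*x)))/x := by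
    rw [ae_restrict_iff' measurableSet_Ioi]
    filter_upwards with x hx
    rw [integral_Icc_eq_integral_Ioc, ← intervalIntegral.integral_of_le hab]
    exact inner_int a b x hx
  have hint : IntegrableOn (fun x => (exp (-(a*x)) - exp (-(b*x)))/x) (Ioi 0) :=
    (hf'.integral_prod_left).congr hFcong
  refine ⟨hint, ?_⟩
  have hL : (∫ x in Ioi (0:ℝ), (exp (-(a*x)) - exp (-(b*x)))/x)
      = ∫ x, (∫ t, exp (-(t*x)) ∂ν) ∂μ := (integral_congr_ae hFcong).symm
  rw [hL, hswap]
  have : (∫ t, (∫ x, exp (-(t*x)) ∂μ) ∂ν) = ∫ t in Icc a b, (1/t) := by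
    rw [hν]
    apply setIntegral_congr_fun measurableSet_Icc
    intro t ht
    exact aux_exp_int t (lt_of_lt_of_le ha ht.1)
  rw [this, integral_Icc_eq_integral_Ioc, ← intervalIntegral.integral_of_le hab,
    integral_one_div_of_pos ha (lt_of_lt_of_le ha hab), log_div (lt_of_lt_of_le ha hab).ne' ha.ne']

lemma frullani (a b : ℝ) (ha : 0 < a) (hb : 0 < b) :
    IntegrableOn (fun x => (exp (-(a*x)) - exp (-(b*x)))/x) (Ioi 0) ∧
    ∫ x in Ioi (0:ℝ), (exp (-(a*x)) - exp (-(b*x)))/x = log b - log a := by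
  rcases le_total a b with hab | hab
  · exact frullani_le a b ha hab
  · obtain ⟨hi, hv⟩ := frullani_le b a hb hab
    have heq : (fun x:ℝ => (exp (-(a*x)) - exp (-(b*x)))/x)
        = fun x => -((exp (-(b*x)) - exp (-(a*x)))/x) := by funext x; ring
    rw [heq]
    exact ⟨hi.neg, by rw [integral_neg, hv]; ring⟩

/-- Hellinger-type integral for gamma-process Lévy measures:
∫₀^∞ (√(Y(x)) − 1)² ν₀(dx) = log((λ₀+λ₁)²/(4λ₀λ₁)) where Y(x) = e^{(λ₀−λ₁)x}
and ν₀(dx) = 1_{x>0} e^{-λ₀ x} dx/x. -/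
theorem gamma_levy_hellinger (l0 l1 : ℝ) (h0 : 0 < l0) (h1 : 0 < l1) :
    (∫ x in Ioi (0 : ℝ),
        (Real.sqrt (Real.exp ((l0 - l1) * x)) - 1) ^ 2 * (Real.exp (-(l0 * x)) / x))
      = Real.log ((l0 + l1) ^ 2 / (4 * l0 * l1)) := by
  set m : ℝ := (l0 + l1) / 2 with hm_def
  have hm : 0 < m := by positivity
  have key1 := frullani l1 m h1 hm
  have key2 := frullani l0 m h0 hm
  have hcong : ∀ x ∈ Ioi (0:ℝ),
      (Real.sqrt (Real.exp ((l0 - l1) * x)) - 1) ^ 2 * (Real.exp (-(l0 * x)) / x)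
      = (exp (-(l1*x)) - exp (-(m*x)))/x + (exp (-(l0*x)) - exp (-(m*x)))/x := by
    intro x hx
    rw [← exp_half]
    have e1 : exp ((l0-l1)*x/2) * exp ((l0-l1)*x/2) * exp (-(l0*x)) = exp (-(l1*x)) := by
      rw [← exp_add, ← exp_add]; congr 1; ring
    have e2 : exp ((l0-l1)*x/2) * exp (-(l0*x)) = exp (-(m*x)) := by
      rw [← exp_add]; congr 1; rw [hm_def]; ring
    calc (exp ((l0-l1)*x/2) - 1) ^ 2 * (exp (-(l0*x)) / x)
        = (exp ((l0-l1)*x/2) * exp ((l0-l1)*x/2) * exp (-(l0*x))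
            - 2*(exp ((l0-l1)*x/2) * exp (-(l0*x))) + exp (-(l0*x)))/x := by ring
      _ = (exp (-(l1*x)) - 2*exp (-(m*x)) + exp (-(l0*x)))/x := by rw [e1, e2]
      _ = (exp (-(l1*x)) - exp (-(m*x)))/x + (exp (-(l0*x)) - exp (-(m*x)))/x := by ring
  rw [setIntegral_congr_fun measurableSet_Ioi hcong, integral_add key1.1 key2.1,
    key1.2, key2.2]
  rw [show (l0 + l1)^2/(4*l0*l1) = (m/l1)*(m/l0) by rw [hm_def]; field_simp; ring,
    log_mul (div_pos hm h1).ne' (div_pos hm h0).ne', log_div hm.ne' h1.ne',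
    log_div hm.ne' h0.ne']
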